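/- One has M ∘ Γ = D ∘ M as R-linear endomorphisms of V. In other words, M conjugates the LKB image of the Garside element (in the specialization x = t q⁻¹, y = −t⁻¹) to the generalized permutation map D, so that the conjugation equation M Γ M⁻¹ = D admits a solution M. -/

import Mathlib

open Finset

lemma sum_Icc_top {M : Type*} [AddCommMonoid M] (a b : ℕ) (h : a ≤ b + 1) (f : ℕ → M) :
    ∑ i ∈ Icc a (b+1), f i = (∑ i ∈ Icc a b, f i) + f (b+1) := by
  rw [← Finset.insert_Icc_right_eq_Icc_add_one h, Finset.sum_insert (by simp)]
  exact add_comm _ _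

lemma sum_Icc_shift {M : Type*} [AddCommMonoid M] (a b : ℕ) (f : ℕ → M) :
    ∑ s ∈ Icc (a+1) (b+1), f s = ∑ s ∈ Icc a b, f (s+1) := by
  rw [← Finset.map_add_right_Icc a b 1, Finset.sum_map]
  rfl

/-- `compSeq σ a L = σ (a + L - 1) ∘ ⋯ ∘ σ (a + 1) ∘ σ a` (the identity if `L = 0`).
In particular `compSeq σ 1 n = σ n ∘ ⋯ ∘ σ 1`. -/
def compSeq {R : Type*} [CommSemiring R] {V : Type*} [AddCommMonoid V] [Module R V]
    (σ : ℕ → Module.End R V) (a : ℕ) : ℕ → Module.End R V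
  | 0 => 1
  | L + 1 => σ (a + L) * compSeq σ a L

/-- In the specialization `x = t q⁻¹`, `y = -t⁻¹`, the base-change endomorphism `M`
conjugates the LKB image `Γ = σ_n ∘ ⋯ ∘ σ_1` of the Garside element to the generalized
permutation map `D`: one has `M ∘ Γ = D ∘ M`, i.e. the equation `M Γ M⁻¹ = D` admits the
solution `M`. -/
theorem M_conjugates_Gamma_to_D {R : Type*} [CommRing R] (q t : Rˣ)
    (x : Rˣ) (hx : x = t * q⁻¹) (y : R) (hy : y = -((t⁻¹ : Rˣ) : R))
    {V : Type*} [AddCommGroup V] [Module R V]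
    (n : ℕ) (hn : 1 ≤ n)
    (e : ℕ → ℕ → V)
    (b : Module.Basis {p : ℕ × ℕ // 1 ≤ p.1 ∧ p.1 < p.2 ∧ p.2 ≤ n + 1} R V)
    (hb : ∀ p : {p : ℕ × ℕ // 1 ≤ p.1 ∧ p.1 < p.2 ∧ p.2 ≤ n + 1}, b p = e p.1.1 p.1.2)
    (σ : ℕ → Module.End R V)
    (hσ : ∀ k i j, 1 ≤ k → k ≤ n → 1 ≤ i → i < j → j ≤ n + 1 →
      σ k (e i j) =
        if i = k + 1 then (x : R) • e k j + (1 - (x : R)) • e i j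
        else if k = i ∧ i + 1 < j then
          e (i + 1) j - ((x : R) * y * ((x : R) - 1)) • e k (k + 1)
        else if k = i ∧ j = i + 1 then -(((x : R) ^ 2 * y) • e k (k + 1))
        else if i < k ∧ k + 1 < j then e i j - (y * ((x : R) - 1) ^ 2) • e k (k + 1)
        else if i < k ∧ k + 1 = j then
          e i (j - 1) - ((x : R) * y * ((x : R) - 1)) • e k (k + 1)
        else if k = j then (x : R) • e i (j + 1) + (1 - (x : R)) • e i j
        else e i j)
    (M : Module.End R V)
    (hM : ∀ i j, 1 ≤ i → i < j → j ≤ n + 1 →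
      M (e i j) = e i j + ∑ s ∈ Finset.Icc (i + 1) (j - 1),
        (1 - ((x⁻¹ : Rˣ) : R)) • e i s)
    (D : Module.End R V)
    (hD1 : ∀ j, 2 ≤ j → j ≤ n + 1 →
      D (e 1 j) = ((t ^ (n + 2 - j) * q ^ ((j : ℤ) - (n : ℤ) - 3) : Rˣ) : R) •
        e (j - 1) (n + 1))
    (hD2 : ∀ i j, 2 ≤ i → i < j → j ≤ n + 1 →
      D (e i j) = ((t * q⁻¹ : Rˣ) : R) • e (i - 1) (j - 1)) :
    M * compSeq σ 1 n = D * M := by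
  -- notation
  set X : R := ((x : Rˣ) : R) with hX
  set xinv : R := ((x⁻¹ : Rˣ) : R) with hxinvdef
  set xp : ℤ → R := fun m => ((x ^ m : Rˣ) : R) with hxpdef
  have hxp : ∀ m k : ℤ, xp (m + k) = xp m * xp k := fun m k => by
    simp [hxpdef, zpow_add]
  have hxp1 : xp 1 = X := by simp [hxpdef, hX]
  have hxinv : xinv = xp (-1) := by simp [hxpdef, hxinvdef]
  -- specialized LKB relations
  have hs1 : ∀ k j, 1 ≤ k → k ≤ n → k + 1 < j → j ≤ n + 1 →
      σ k (e (k+1) j) = X • e k j + (1 - X) • e (k+1) j := by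
    intro k j hk1 hk2 h3 h4
    rw [hσ k (k+1) j hk1 hk2 (by omega) (by omega) h4, if_pos rfl]
  have hs2 : ∀ k j, 1 ≤ k → k ≤ n → k + 1 < j → j ≤ n + 1 →
      σ k (e k j) = e (k+1) j - (X * y * (X - 1)) • e k (k+1) := by
    intro k j hk1 hk2 h3 h4
    rw [hσ k k j hk1 hk2 hk1 (by omega) h4, if_neg (by omega), if_pos ⟨rfl, h3⟩]
  have hs3 : ∀ k, 1 ≤ k → k ≤ n → σ k (e k (k+1)) = -((X^2 * y) • e k (k+1)) := by
    intro k hk1 hk2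
    rw [hσ k k (k+1) hk1 hk2 hk1 (by omega) (by omega), if_neg (by omega),
      if_neg (by omega), if_pos ⟨rfl, rfl⟩]
  have hs4 : ∀ k i j, 1 ≤ i → i < k → k + 1 < j → j ≤ n + 1 →
      σ k (e i j) = e i j - (y * (X - 1)^2) • e k (k+1) := by
    intro k i j h1 h2 h3 h4
    rw [hσ k i j (by omega) (by omega) h1 (by omega) h4, if_neg (by omega),
      if_neg (by omega), if_neg (by omega), if_pos ⟨h2, h3⟩]
  have hs5 : ∀ k i, 1 ≤ i → i < k → k ≤ n →
      σ k (e i (k+1)) = e i k - (X * y * (X - 1)) • e k (k+1) := by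
    intro k i h1 h2 h3
    have : σ k (e i (k+1)) = e i (k+1-1) - (X * y * (X - 1)) • e k (k+1) := by
      rw [hσ k i (k+1) (by omega) h3 h1 (by omega) (by omega), if_neg (by omega),
        if_neg (by omega), if_neg (by omega), if_neg (by omega), if_pos ⟨h2, rfl⟩]
    simpa using this
  have hs6 : ∀ k i, 1 ≤ i → i < k → k ≤ n →
      σ k (e i k) = X • e i (k+1) + (1 - X) • e i k := by
    intro k i h1 h2 h3
    rw [hσ k i k (by omega) h3 h1 h2 (by omega), if_neg (by omega), if_neg (by omega),
      if_neg (by omega), if_neg (by omega), if_neg (by omega), if_pos rfl]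
  have hs7 : ∀ k i j, 1 ≤ k → k ≤ n → 1 ≤ i → i < j → j ≤ n + 1 →
      (k + 1 < i ∨ j < k) → σ k (e i j) = e i j := by
    intro k i j hk1 hk2 h1 h2 h3 h4
    rw [hσ k i j hk1 hk2 h1 h2 h3, if_neg (by omega), if_neg (by omega),
      if_neg (by omega), if_neg (by omega), if_neg (by omega), if_neg (by omega)]
  -- partial products on e i j, i ≥ 2
  have hA1 : ∀ i j L, 2 ≤ i → i < j → j ≤ n + 1 → L + 2 ≤ i →
      compSeq σ 1 L (e i j) = e i j := by
    intro i j L h2 h3 h4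
    induction L with
    | zero => intro _; simp [compSeq]
    | succ L ih =>
      intro h
      rw [compSeq, Module.End.mul_apply, ih (by omega), Nat.add_comm 1 L,
        hs7 (L+1) i j (by omega) (by omega) (by omega) h3 h4 (Or.inl (by omega))]
  have hA2 : ∀ i j, 2 ≤ i → i < j → j ≤ n + 1 → ∀ L, i - 1 ≤ L → L + 2 ≤ j →
      compSeq σ 1 L (e i j) = X • e (i-1) j + (1 - X) • e (L+1) j := by
    intro i j h2 h3 h4 L hL
    induction L, hL using Nat.le_induction with
    | base =>
      intro hj
      obtain ⟨m, rfl⟩ : ∃ m, i = m + 2 := ⟨i - 2, by omega⟩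
      have hm1 : m + 2 - 1 = m + 1 := rfl
      rw [hm1, compSeq, Module.End.mul_apply, Nat.add_comm 1 m,
        hA1 (m+2) j m (by omega) h3 h4 (by omega),
        hs1 (m+1) j (by omega) (by omega) (by omega) h4]
    | succ L hL ih =>
      intro hj
      rw [compSeq, Module.End.mul_apply, Nat.add_comm 1 L, ih (by omega), map_add,
        map_smul, map_smul,
        hs4 (L+1) (i-1) j (by omega) (by omega) (by omega) h4,
        hs2 (L+1) j (by omega) (by omega) (by omega) h4]
      module
  have hA3 : ∀ i j, 2 ≤ i → i < j → j ≤ n + 1 → ∀ L, j - 1 ≤ L → L ≤ n →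
      compSeq σ 1 L (e i j) = X • e (i-1) (j-1) := by
    intro i j h2 h3 h4 L hL
    induction L, hL using Nat.le_induction with
    | base =>
      intro hLn
      obtain ⟨m, rfl⟩ : ∃ m, j = m + 2 := ⟨j - 2, by omega⟩
      have hm1 : m + 2 - 1 = m + 1 := rfl
      rw [hm1, compSeq, Module.End.mul_apply, Nat.add_comm 1 m,
        hA2 i (m+2) h2 h3 h4 m (by omega) (by omega), map_add, map_smul, map_smul,
        hs5 (m+1) (i-1) (by omega) (by omega) (by omega),
        hs3 (m+1) (by omega) (by omega)]
      module
    | succ L hL ih =>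
      intro hLn
      rw [compSeq, Module.End.mul_apply, Nat.add_comm 1 L, ih (by omega), map_smul,
        hs7 (L+1) (i-1) (j-1) (by omega) (by omega) (by omega) (by omega) (by omega)
          (Or.inr (by omega))]
  -- partial products on e 1 j
  have hB1 : ∀ j, 2 ≤ j → j ≤ n + 1 → ∀ L, 1 ≤ L → L + 2 ≤ j →
      compSeq σ 1 L (e 1 j) = e (L+1) j +
        y • ∑ a ∈ Icc 1 L, ((∑ b ∈ Icc (a+1) L, (xp ((b:ℤ) - a) * (X-1)^2) • e a b)
          - (xp ((L:ℤ) + 1 - a) * (X-1)) • e a (L+1)) := by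
    intro j hj2 hjn L hL
    induction L, hL using Nat.le_induction with
    | base =>
      intro hj
      have h0 : compSeq σ 1 1 (e 1 j) = σ 1 (e 1 j) := rfl
      rw [h0, hs2 1 j (by omega) (by omega) (by omega) (by omega), Finset.Icc_self,
        Finset.sum_singleton, Finset.Icc_eq_empty (by omega), Finset.sum_empty,
        show ((1:ℕ):ℤ) + 1 - ((1:ℕ):ℤ) = 1 from by omega, hxp1]
      module
    | succ L hL ih =>
      intro hj
      rw [compSeq, Module.End.mul_apply, Nat.add_comm 1 L, ih (by omega), map_add,
        map_smul, map_sum, hs2 (L+1) j (by omega) (by omega) (by omega) (by omega)]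
      have hterm : ∀ a ∈ Icc 1 L,
          σ (L+1) ((∑ b ∈ Icc (a+1) L, (xp ((b:ℤ) - a) * (X-1)^2) • e a b)
            - (xp ((L:ℤ) + 1 - a) * (X-1)) • e a (L+1))
          = (∑ b ∈ Icc (a+1) L, (xp ((b:ℤ) - a) * (X-1)^2) • e a b)
            - (xp ((L:ℤ) + 1 - a) * (X-1)) • (X • e a (L+1+1) + (1 - X) • e a (L+1)) := by
        intro a ha
        simp only [mem_Icc] at ha
        rw [map_sub, map_smul, map_sum, hs6 (L+1) a (by omega) (by omega) (by omega)]
        congr 1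
        refine Finset.sum_congr rfl fun c hc => ?_
        simp only [mem_Icc] at hc
        rw [map_smul, hs7 (L+1) a c (by omega) (by omega) (by omega) (by omega)
          (by omega) (Or.inr (by omega))]
      rw [Finset.sum_congr rfl hterm]
      conv_rhs => rw [sum_Icc_top 1 L (by omega)]
      have hFG : ∀ a ∈ Icc 1 L,
          (∑ b ∈ Icc (a+1) (L+1), (xp ((b:ℤ) - a) * (X-1)^2) • e a b
            - (xp (((L+1:ℕ):ℤ) + 1 - a) * (X-1)) • e a (L+1+1))
          = (∑ b ∈ Icc (a+1) L, (xp ((b:ℤ) - a) * (X-1)^2) • e a b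
            - (xp ((L:ℤ) + 1 - a) * (X-1)) • (X • e a (L+1+1) + (1 - X) • e a (L+1))) := by
        intro a ha
        simp only [mem_Icc] at ha
        rw [sum_Icc_top (a+1) L (by omega),
          show ((L+1:ℕ):ℤ) - (a:ℤ) = (L:ℤ) + 1 - a from by omega,
          show ((L+1:ℕ):ℤ) + 1 - (a:ℤ) = ((L:ℤ) + 1 - a) + 1 from by omega,
          hxp, hxp1]
        module
      rw [Finset.sum_congr rfl hFG, Finset.Icc_eq_empty (by omega : ¬(L+1+1 ≤ L+1)),
        Finset.sum_empty,
        show ((L+1:ℕ):ℤ) + 1 - ((L+1:ℕ):ℤ) = 1 from by omega, hxp1]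
      module
  have hB2 : ∀ j, 2 ≤ j → j ≤ n + 1 → ∀ L, j - 1 ≤ L → L ≤ n →
      compSeq σ 1 L (e 1 j) =
        y • ((∑ a ∈ Icc 1 (j-2), ((∑ b ∈ Icc (a+1) L, (xp ((b:ℤ) - a) * (X-1)^2) • e a b)
            - (xp ((L:ℤ) + 1 - a) * (X-1)) • e a (L+1)))
          + (∑ b ∈ Icc j L, (xp ((b:ℤ) - j + 2) * (X-1)) • e (j-1) b)
          - xp ((L:ℤ) - j + 3) • e (j-1) (L+1)) := by
    intro j hj2 hjn L hL
    induction L, hL using Nat.le_induction with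
    | base =>
      intro hLn
      obtain ⟨m, rfl⟩ : ∃ m, j = m + 2 := ⟨j - 2, by omega⟩
      rcases m with _ | m
      · rw [show 0+2-1 = 1 from rfl, show 0+2-2 = 0 from rfl,
          Finset.Icc_eq_empty (by omega : ¬(1:ℕ) ≤ 0), Finset.sum_empty,
          Finset.Icc_eq_empty (by omega : ¬(0+2:ℕ) ≤ 1), Finset.sum_empty]
        have h0 : compSeq σ 1 1 (e 1 (0+2)) = σ 1 (e 1 (1+1)) := rfl
        rw [h0, hs3 1 le_rfl hn,
          show ((1:ℕ):ℤ) - ((0+2:ℕ):ℤ) + 3 = 1 + 1 from by omega, hxp, hxp1]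
        module
      · rw [show m+1+2-1 = m+1+1 from rfl, show m+1+2-2 = m+1 from rfl, compSeq,
          Module.End.mul_apply, Nat.add_comm 1 (m+1),
          hB1 (m+1+2) (by omega) (by omega) (m+1) (by omega) (by omega),
          show m+1+2 = m+1+1+1 from rfl, map_add, map_smul, map_sum,
          hs3 (m+1+1) (by omega) (by omega)]
        have hterm : ∀ a ∈ Icc 1 (m+1),
            σ (m+1+1) ((∑ b ∈ Icc (a+1) (m+1), (xp ((b:ℤ) - a) * (X-1)^2) • e a b)
              - (xp (((m+1:ℕ):ℤ) + 1 - a) * (X-1)) • e a (m+1+1))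
            = (∑ b ∈ Icc (a+1) (m+1), (xp ((b:ℤ) - a) * (X-1)^2) • e a b)
              - (xp (((m+1:ℕ):ℤ) + 1 - a) * (X-1))
                • (X • e a (m+1+1+1) + (1 - X) • e a (m+1+1)) := by
          intro a ha
          simp only [mem_Icc] at ha
          rw [map_sub, map_smul, map_sum, hs6 (m+1+1) a (by omega) (by omega) (by omega)]
          congr 1
          refine Finset.sum_congr rfl fun c hc => ?_
          simp only [mem_Icc] at hc
          rw [map_smul, hs7 (m+1+1) a c (by omega) (by omega) (by omega) (by omega)
            (by omega) (Or.inr (by omega))]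
        rw [Finset.sum_congr rfl hterm]
        have hFG : ∀ a ∈ Icc 1 (m+1),
            (∑ b ∈ Icc (a+1) (m+1+1), (xp ((b:ℤ) - a) * (X-1)^2) • e a b
              - (xp (((m+1+1:ℕ):ℤ) + 1 - a) * (X-1)) • e a (m+1+1+1))
            = (∑ b ∈ Icc (a+1) (m+1), (xp ((b:ℤ) - a) * (X-1)^2) • e a b
              - (xp (((m+1:ℕ):ℤ) + 1 - a) * (X-1))
                • (X • e a (m+1+1+1) + (1 - X) • e a (m+1+1))) := by
          intro a ha
          simp only [mem_Icc] at ha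
          rw [sum_Icc_top (a+1) (m+1) (by omega),
            show ((m+1+1:ℕ):ℤ) - (a:ℤ) = ((m+1:ℕ):ℤ) + 1 - a from by omega,
            show ((m+1+1:ℕ):ℤ) + 1 - (a:ℤ) = (((m+1:ℕ):ℤ) + 1 - a) + 1 from by omega,
            hxp, hxp1]
          module
        rw [Finset.sum_congr rfl hFG,
          Finset.Icc_eq_empty (by omega : ¬(m+1+1+1:ℕ) ≤ m+1+1), Finset.sum_empty,
          show ((m+1+1:ℕ):ℤ) - ((m+1+1+1:ℕ):ℤ) + 3 = 1 + 1 from by omega, hxp, hxp1]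
        module
    | succ L hL ih =>
      intro hLn
      rw [compSeq, Module.End.mul_apply, Nat.add_comm 1 L, ih (by omega)]
      simp only [map_smul, map_add, map_sub, map_sum]
      have hterm : ∀ a ∈ Icc 1 (j-2),
          ((∑ b ∈ Icc (a+1) L, (xp ((b:ℤ) - a) * (X-1)^2) • σ (L+1) (e a b))
            - (xp ((L:ℤ) + 1 - a) * (X-1)) • σ (L+1) (e a (L+1)))
          = (∑ b ∈ Icc (a+1) L, (xp ((b:ℤ) - a) * (X-1)^2) • e a b)
            - (xp ((L:ℤ) + 1 - a) * (X-1)) • (X • e a (L+1+1) + (1 - X) • e a (L+1)) := by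
        intro a ha
        simp only [mem_Icc] at ha
        rw [hs6 (L+1) a (by omega) (by omega) (by omega)]
        congr 1
        refine Finset.sum_congr rfl fun c hc => ?_
        simp only [mem_Icc] at hc
        rw [hs7 (L+1) a c (by omega) (by omega) (by omega) (by omega)
          (by omega) (Or.inr (by omega))]
      have hterm2 : ∀ c ∈ Icc j L,
          (xp ((c:ℤ) - j + 2) * (X-1)) • σ (L+1) (e (j-1) c)
          = (xp ((c:ℤ) - j + 2) * (X-1)) • e (j-1) c := by
        intro c hc
        simp only [mem_Icc] at hc
        rw [hs7 (L+1) (j-1) c (by omega) (by omega) (by omega) (by omega)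
          (by omega) (Or.inr (by omega))]
      rw [Finset.sum_congr rfl hterm, Finset.sum_congr rfl hterm2,
        hs6 (L+1) (j-1) (by omega) (by omega) (by omega)]
      conv_rhs => rw [sum_Icc_top j L (by omega)]
      have hFG : ∀ a ∈ Icc 1 (j-2),
          (∑ b ∈ Icc (a+1) (L+1), (xp ((b:ℤ) - a) * (X-1)^2) • e a b
            - (xp (((L+1:ℕ):ℤ) + 1 - a) * (X-1)) • e a (L+1+1))
          = (∑ b ∈ Icc (a+1) L, (xp ((b:ℤ) - a) * (X-1)^2) • e a b
            - (xp ((L:ℤ) + 1 - a) * (X-1)) • (X • e a (L+1+1) + (1 - X) • e a (L+1))) := by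
        intro a ha
        simp only [mem_Icc] at ha
        rw [sum_Icc_top (a+1) L (by omega),
          show ((L+1:ℕ):ℤ) - (a:ℤ) = (L:ℤ) + 1 - a from by omega,
          show ((L+1:ℕ):ℤ) + 1 - (a:ℤ) = ((L:ℤ) + 1 - a) + 1 from by omega,
          hxp, hxp1]
        module
      rw [Finset.sum_congr rfl hFG,
        show ((L+1:ℕ):ℤ) - (j:ℤ) + 2 = (L:ℤ) - j + 3 from by omega,
        show xp (((L+1:ℕ):ℤ) - (j:ℤ) + 3) = xp ((L:ℤ) - j + 3) * X from by
          rw [show ((L+1:ℕ):ℤ) - (j:ℤ) + 3 = ((L:ℤ) - j + 3) + 1 from by omega, hxp, hxp1]]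
      module
  -- geometric-sum lemma for M
  have hC : ∀ a, 1 ≤ a → ∀ m, a ≤ m → m ≤ n + 1 →
      ∑ s ∈ Icc (a+1) m, xp ((s:ℤ) - a) • M (e a s)
        = xp ((m:ℤ) - a) • ∑ s ∈ Icc (a+1) m, e a s := by
    intro a ha m hm
    have hXxinv : X * xinv = 1 := by rw [hX, hxinvdef]; exact Units.mul_inv x
    induction m, hm using Nat.le_induction with
    | base =>
      intro _
      rw [Finset.Icc_eq_empty (by omega : ¬ a+1 ≤ a), Finset.sum_empty, Finset.sum_empty,
        smul_zero]
    | succ m hm ih =>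
      intro h
      rw [sum_Icc_top (a+1) m (by omega), sum_Icc_top (a+1) m (by omega), ih (by omega),
        hM a (m+1) (by omega) (by omega) (by omega), show m+1-1 = m from rfl,
        ← Finset.smul_sum,
        show xp (((m+1:ℕ):ℤ) - a) = xp ((m:ℤ) - a) * X from by
          rw [show ((m+1:ℕ):ℤ) - (a:ℤ) = ((m:ℤ) - a) + 1 from by omega, hxp, hxp1]]
      rw [smul_add, smul_smul]
      have hexp : xp ((m:ℤ) - a) * X * (1 - xinv)
          = xp ((m:ℤ) - a) * X - xp ((m:ℤ) - a) := by
        linear_combination (-(xp ((m:ℤ) - a))) * hXxinv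
      rw [hexp]
      module
  -- row cancellation lemmas
  have rowC : ∀ a, 1 ≤ a → a ≤ n →
      (∑ b ∈ Icc (a+1) n, (xp ((b:ℤ) - a) * (X-1)^2) • M (e a b))
        - (xp ((n:ℤ) + 1 - a) * (X-1)) • M (e a (n+1))
      = -((xp ((n:ℤ) + 1 - a) * (X-1)) • e a (n+1)) := by
    intro a ha han
    have key := hC a ha n (by omega) (by omega)
    have h1 : ∀ c ∈ Icc (a+1) n, (xp ((c:ℤ) - a) * (X-1)^2) • M (e a c)
        = (X-1)^2 • (xp ((c:ℤ) - a) • M (e a c)) := by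
      intro c hc; rw [smul_smul, mul_comm]
    have hXxinv : X * xinv = 1 := by rw [hX, hxinvdef]; exact Units.mul_inv x
    have h2 : xp ((n:ℤ) + 1 - a) = xp ((n:ℤ) - a) * X := by
      rw [show (n:ℤ) + 1 - (a:ℤ) = ((n:ℤ) - a) + 1 from by omega, hxp, hxp1]
    rw [Finset.sum_congr rfl h1, ← Finset.smul_sum, key,
      hM a (n+1) (by omega) (by omega) (by omega), show n+1-1 = n from rfl,
      ← Finset.smul_sum, smul_add, smul_smul, smul_smul]
    have hexp : xp ((n:ℤ) + 1 - a) * (X-1) * (1 - xinv)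
        = (xp ((n:ℤ) - a) * X - xp ((n:ℤ) - a)) * (X-1) := by
      rw [h2]
      linear_combination (-(xp ((n:ℤ) - a)) * (X-1)) * hXxinv
    rw [hexp]
    module
  have row2 : ∀ j, 2 ≤ j → j ≤ n + 1 →
      (∑ b ∈ Icc j n, (xp ((b:ℤ) - j + 2) * (X-1)) • M (e (j-1) b))
        - xp ((n:ℤ) - j + 3) • M (e (j-1) (n+1))
      = -(xp ((n:ℤ) - j + 3) • e (j-1) (n+1)) := by
    intro j hj2 hjn
    have key := hC (j-1) (by omega) n (by omega) (by omega)
    rw [show j-1+1 = j from by omega] at key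
    have h1 : ∀ c ∈ Icc j n, (xp ((c:ℤ) - j + 2) * (X-1)) • M (e (j-1) c)
        = (X * (X-1)) • (xp ((c:ℤ) - ((j-1:ℕ):ℤ)) • M (e (j-1) c)) := by
      intro c hc
      rw [smul_smul]
      congr 1
      rw [show ((c:ℤ) - (j:ℕ) + 2) = 1 + ((c:ℤ) - ((j-1:ℕ):ℤ)) from by omega, hxp, hxp1]
      ring
    have hXxinv : X * xinv = 1 := by rw [hX, hxinvdef]; exact Units.mul_inv x
    have hA : xp ((n:ℤ) - j + 3) = xp ((n:ℤ) - ((j-1:ℕ):ℤ)) * X * X := by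
      rw [show (n:ℤ) - (j:ℕ) + 3 = (((n:ℤ) - ((j-1:ℕ):ℤ)) + 1) + 1 from by omega,
        hxp, hxp, hxp1]
    have hB : xp ((n:ℤ) - j + 3) * xinv = xp ((n:ℤ) - ((j-1:ℕ):ℤ)) * X := by
      rw [hxinv, ← hxp, show ((n:ℤ) - (j:ℕ) + 3) + -1 = ((n:ℤ) - ((j-1:ℕ):ℤ)) + 1 from by
        omega, hxp, hxp1]
    rw [Finset.sum_congr rfl h1, ← Finset.smul_sum, key,
      hM (j-1) (n+1) (by omega) (by omega) (by omega), show n+1-1 = n from rfl,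
      show j-1+1 = j from by omega, ← Finset.smul_sum, smul_add, smul_smul, smul_smul]
    have hexp : xp ((n:ℤ) - j + 3) * (1 - xinv)
        = X * (X-1) * xp ((n:ℤ) - ((j-1:ℕ):ℤ)) := by
      linear_combination hA - hB
    rw [hexp]
    module
  -- coefficient of D on e 1 j
  have hDcoef : ∀ s, 2 ≤ s → s ≤ n + 1 →
      ((t ^ (n + 2 - s) * q ^ ((s : ℤ) - (n : ℤ) - 3) : Rˣ) : R)
        = -(y * xp ((n:ℤ) + 3 - s)) := by
    intro s hs2 hsn
    have ht : (t ^ (n + 2 - s) : Rˣ) = t ^ ((n:ℤ) + 3 - s) * t⁻¹ := by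
      rw [← zpow_natCast t (n + 2 - s),
        show ((n+2-s:ℕ):ℤ) = ((n:ℤ) + 3 - s) + (-1) from by omega, zpow_add, zpow_neg_one]
    have hu : (t ^ (n + 2 - s) * q ^ ((s:ℤ) - (n:ℤ) - 3) : Rˣ)
        = x ^ ((n:ℤ) + 3 - s) * t⁻¹ := by
      rw [ht, hx, mul_zpow, inv_zpow',
        show -((n:ℤ) + 3 - s) = (s:ℤ) - (n:ℤ) - 3 from by omega]
      exact mul_right_comm _ _ _
    have := congrArg (Units.val) hu
    rw [this, Units.val_mul,
      show ((x ^ ((n:ℤ) + 3 - s) : Rˣ) : R) = xp ((n:ℤ) + 3 - s) from rfl,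
      show ((t⁻¹ : Rˣ) : R) = -y from by rw [hy]; ring]
    ring
  -- main proof
  refine Module.Basis.ext b fun p => ?_
  obtain ⟨⟨i, j⟩, h1, h2, h3⟩ := p
  simp only [hb, Module.End.mul_apply]
  rcases Nat.lt_or_ge i 2 with hi | hi
  · -- i = 1
    have hi1 : i = 1 := by omega
    subst hi1
    rw [hB2 j (by omega) h3 n (by omega) le_rfl]
    simp only [map_smul, map_add, map_sub, map_sum]
    have hrow : ∀ a ∈ Icc 1 (j-2),
        ((∑ c ∈ Icc (a+1) n, (xp ((c:ℤ) - a) * (X-1)^2) • M (e a c))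
          - (xp ((n:ℤ) + 1 - a) * (X-1)) • M (e a (n+1)))
        = -((xp ((n:ℤ) + 1 - a) * (X-1)) • e a (n+1)) := by
      intro a ha
      simp only [mem_Icc] at ha
      exact rowC a (by omega) (by omega)
    rw [Finset.sum_congr rfl hrow, add_sub_assoc, row2 j (by omega) h3,
      hM 1 j le_rfl h2 h3, map_add, map_sum, hD1 j (by omega) h3,
      hDcoef j (by omega) h3]
    have hDs : ∀ s ∈ Icc (1+1) (j-1), D ((1 - xinv) • e 1 s)
        = (1 - xinv) • (-(y * xp ((n:ℤ) + 3 - s)) • e (s-1) (n+1)) := by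
      intro s hs
      simp only [mem_Icc] at hs
      rw [map_smul, hD1 s (by omega) (by omega), hDcoef s (by omega) (by omega)]
    rw [Finset.sum_congr rfl hDs]
    have hre : ∑ s ∈ Icc (1+1) (j-1), (1 - xinv) • (-(y * xp ((n:ℤ) + 3 - s)) • e (s-1) (n+1))
        = ∑ a ∈ Icc 1 (j-2), (1 - xinv) • (-(y * xp ((n:ℤ) + 3 - ((a+1:ℕ):ℤ))) • e a (n+1)) := by
      rw [show j-1 = (j-2)+1 from by omega, sum_Icc_shift]
      exact Finset.sum_congr rfl fun s hs => by rw [show s+1-1 = s from rfl]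
    rw [hre, smul_add, Finset.smul_sum]
    have hXxinv : X * xinv = 1 := by rw [hX, hxinvdef]; exact Units.mul_inv x
    have hterm : ∀ a ∈ Icc 1 (j-2),
        y • -((xp ((n:ℤ) + 1 - a) * (X-1)) • e a (n+1))
        = (1 - xinv) • (-(y * xp ((n:ℤ) + 3 - ((a+1:ℕ):ℤ))) • e a (n+1)) := by
      intro a ha
      simp only [mem_Icc] at ha
      have hA : xp ((n:ℤ) + 3 - ((a+1:ℕ):ℤ)) = xp ((n:ℤ) + 1 - a) * X := by
        rw [show (n:ℤ) + 3 - ((a+1:ℕ):ℤ) = ((n:ℤ) + 1 - (a:ℤ)) + 1 from by omega, hxp, hxp1]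
      have hB : xp ((n:ℤ) + 3 - ((a+1:ℕ):ℤ)) * xinv = xp ((n:ℤ) + 1 - a) := by
        rw [hxinv, ← hxp,
          show ((n:ℤ) + 3 - ((a+1:ℕ):ℤ)) + -1 = (n:ℤ) + 1 - (a:ℤ) from by omega]
      have hsc : (1 - xinv) * -(y * xp ((n:ℤ) + 3 - ((a+1:ℕ):ℤ)))
          = -(y * (xp ((n:ℤ) + 1 - a) * (X-1))) := by
        linear_combination (-y) * hA + y * hB
      rw [smul_smul, hsc]
      module
    have hhead : y • -(xp ((n:ℤ) - j + 3) • e (j-1) (n+1))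
        = -(y * xp ((n:ℤ) + 3 - j)) • e (j-1) (n+1) := by
      rw [show (n:ℤ) - (j:ℤ) + 3 = (n:ℤ) + 3 - j from by omega]
      module
    rw [Finset.sum_congr rfl hterm, hhead]
    exact add_comm _ _
  · -- i ≥ 2
    rw [hA3 i j hi h2 h3 n (by omega) le_rfl, map_smul,
      hM (i-1) (j-1) (by omega) (by omega) (by omega), hM i j h1 h2 h3, map_add, map_sum,
      hD2 i j hi h2 h3]
    have hXcoef : ((t * q⁻¹ : Rˣ) : R) = X := by rw [hX, hx]
    have hDs : ∀ s ∈ Icc (i+1) (j-1), D ((1 - xinv) • e i s)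
        = (1 - xinv) • (X • e (i-1) (s-1)) := by
      intro s hs
      simp only [mem_Icc] at hs
      rw [map_smul, hD2 i s hi (by omega) (by omega), hXcoef]
    rw [Finset.sum_congr rfl hDs, hXcoef]
    have hre : ∑ s ∈ Icc (i+1) (j-1), (1 - xinv) • (X • e (i-1) (s-1))
        = ∑ s ∈ Icc i (j-2), (1 - xinv) • (X • e (i-1) s) := by
      rw [show j-1 = (j-2)+1 from by omega, sum_Icc_shift]
      exact Finset.sum_congr rfl fun s hs => by rw [show s+1-1 = s from rfl]
    rw [hre, show i-1+1 = i from by omega, show j-1-1 = j-2 from by omega, smul_add,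
      Finset.smul_sum]
    refine congrArg₂ (· + ·) rfl (Finset.sum_congr rfl fun s hs => ?_)
    rw [smul_smul, smul_smul, mul_comm X (1 - xinv)]
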